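/- arXiv:1902.01690 — 6 statements merged into one kernel-verified Lean document; each statement's English description precedes it below -/
import Mathlib

section
/- Let (K,d) be a nonempty compact metric space, g : K → K continuous, φ : K → ℝ continuous, p ∈ K with g^T(p) = p for some integer T ≥ 1, and δ > 0. Assume that for every x ∈ K there exists 0 ≤ i < T such that |φ(g^j(x)) − φ(g^{i+j}(p))| ≤ δ for every j ≥ 0. For n ≥ 1 and ε > 0 let r_n(ε) be the minimal cardinality of an (n,ε)-spanning set for K, and let Q_n(ε) be the infimum of ∑_{x∈E} exp(S_nφ(x)) over all finite (n,ε)-spanning sets E for K. Then for every ε > 0: limsup_{n→∞} (1/n)·log Q_n(ε) ≥ limsup_{n→∞} (1/n)·log r_n(ε) + (1/T)·∑_{j=0}^{T−1} φ(g^j(p)) − δ. -/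
private lemma aux_shift_sum (f : ℕ → ℝ) (T : ℕ) (hf : ∀ k, f (k + T) = f k) (i : ℕ) :
    ∑ j ∈ Finset.range T, f (i + j) = ∑ j ∈ Finset.range T, f j := by
  induction i with
  | zero => simp
  | succ i ih =>
    rw [← ih]
    have h1 := Finset.sum_range_succ' (fun j => f (i + j)) T
    have h2 := Finset.sum_range_succ (fun j => f (i + j)) T
    have h3 : f (i + T) = f i := hf i
    have h4 : ∑ j ∈ Finset.range T, f (i + 1 + j) = ∑ j ∈ Finset.range T, f (i + (j + 1)) := by
      apply Finset.sum_congr rfl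
      intro j _
      congr 1
      omega
    have h5 : f (i + 0) = f i := by norm_num
    rw [h4]
    linarith

private lemma aux_block_sum (f : ℕ → ℝ) (T : ℕ) (hf : ∀ k, f (k + T) = f k) (i q : ℕ) :
    ∑ j ∈ Finset.range (q * T), f (i + j) = q * ∑ j ∈ Finset.range T, f j := by
  induction q with
  | zero => simp
  | succ q ih =>
    have : (q + 1) * T = q * T + T := by ring
    rw [this, Finset.sum_range_add, ih]
    have : ∑ j ∈ Finset.range T, f (i + (q * T + j))
        = ∑ j ∈ Finset.range T, f ((i + q * T) + j) := by
      apply Finset.sum_congr rfl; intro j _; congr 1; omega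
    rw [this, aux_shift_sum f T hf]
    push_cast
    ring

/-- On a nonempty compact metric space, if every orbit shadows
the periodic orbit of `p` up to a `δ`-error in the values of `φ`, then the
pressure-type quantity `limsup (1/n) log Q_n(ε)` dominates
`limsup (1/n) log r_n(ε) + (1/T)·S_Tφ(p)/T − δ`, where `r_n(ε)` is the minimal
cardinality of an `(n,ε)`-spanning set and `Q_n(ε)` the infimum of the
exponential Birkhoff weights over `(n,ε)`-spanning sets. -/
theorem stmt_2 {K : Type*} [MetricSpace K] [CompactSpace K] [Nonempty K]
    (g : K → K) (hg : Continuous g) (φ : K → ℝ) (hφ : Continuous φ)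
    (p : K) (T : ℕ) (hT : 1 ≤ T) (hp : g^[T] p = p) (δ : ℝ) (hδ : 0 < δ)
    (hshadow : ∀ x : K, ∃ i < T, ∀ j : ℕ, |φ (g^[j] x) - φ (g^[i + j] p)| ≤ δ)
    (r : ℕ → ℝ → ℕ)
    (hr : ∀ n ε, r n ε = sInf {m : ℕ | ∃ E : Finset K,
        (∀ y : K, ∃ x ∈ E, ∀ j < n, dist (g^[j] y) (g^[j] x) < ε) ∧ E.card = m})
    (Q : ℕ → ℝ → ℝ)
    (hQ : ∀ n ε, Q n ε = sInf {c : ℝ | ∃ E : Finset K,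
        (∀ y : K, ∃ x ∈ E, ∀ j < n, dist (g^[j] y) (g^[j] x) < ε) ∧
        c = ∑ x ∈ E, Real.exp (∑ j ∈ Finset.range n, φ (g^[j] x))}) :
    ∀ ε : ℝ, 0 < ε →
      Filter.limsup (fun n : ℕ => (((1 / (n : ℝ)) * Real.log (r n ε) : ℝ) : EReal))
          Filter.atTop
        + (((1 / (T : ℝ)) * ∑ j ∈ Finset.range T, φ (g^[j] p) - δ : ℝ) : EReal)
      ≤ Filter.limsup (fun n : ℕ => (((1 / (n : ℝ)) * Real.log (Q n ε) : ℝ) : EReal))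
          Filter.atTop := by
  intro ε hε
  have hTpos : (0 : ℝ) < T := by exact_mod_cast hT
  set f : ℕ → ℝ := fun k => φ (g^[k] p) with hfdef
  have hper : ∀ k, f (k + T) = f k := by
    intro k
    simp only [hfdef, Function.iterate_add_apply, hp]
  set S : ℝ := ∑ j ∈ Finset.range T, f j with hSdef
  set M : ℝ := ∑ j ∈ Finset.range T, |f j| with hMdef
  have hM0 : 0 ≤ M := Finset.sum_nonneg fun j _ => abs_nonneg _
  have hSM : |S| ≤ M := Finset.abs_sum_le_sum_abs _ _
  have hfmod : ∀ k, f k = f (k % T) := by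
    intro k
    conv_lhs => rw [← Nat.mod_add_div k T]
    simp only [hfdef, Function.iterate_add_apply, Function.iterate_mul,
      Function.iterate_fixed hp]
  have hfbound : ∀ k, |f k| ≤ M := by
    intro k
    rw [hfmod k]
    exact Finset.single_le_sum (fun j _ => abs_nonneg (f j))
      (Finset.mem_range.2 (Nat.mod_lt k hT))
  -- Birkhoff sum lower bound
  set B : ℕ → ℝ := fun n => (n : ℝ) * (S / T) - n * δ - (T + 1) * M with hBdef
  have hbirk : ∀ (x : K) (n : ℕ), B n ≤ ∑ j ∈ Finset.range n, φ (g^[j] x) := by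
    intro x n
    obtain ⟨i, _, hsh⟩ := hshadow x
    have h2 : ∑ j ∈ Finset.range n, (f (i + j) - δ) ≤ ∑ j ∈ Finset.range n, φ (g^[j] x) := by
      apply Finset.sum_le_sum
      intro j _
      have hval : f (i + j) = φ (g^[i + j] p) := rfl
      have := (abs_le.1 (hsh j)).1
      linarith
    rw [Finset.sum_sub_distrib, Finset.sum_const, Finset.card_range, nsmul_eq_mul] at h2
    have hnsplit : n = n / T * T + n % T := (Nat.div_add_mod' n T).symm
    have hsplit : ∑ j ∈ Finset.range n, f (i + j)
        = (n / T : ℕ) * S + ∑ j ∈ Finset.range (n % T), f (i + ((n / T) * T + j)) := by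
      calc ∑ j ∈ Finset.range n, f (i + j)
          = ∑ j ∈ Finset.range (n / T * T + n % T), f (i + j) := by rw [← hnsplit]
        _ = _ := by rw [Finset.sum_range_add, aux_block_sum f T hper]
    have hrest : -((T : ℝ) * M) ≤ ∑ j ∈ Finset.range (n % T), f (i + ((n / T) * T + j)) := by
      have h5 : ∀ j ∈ Finset.range (n % T), -M ≤ f (i + ((n / T) * T + j)) := by
        intro j _
        have := hfbound (i + ((n / T) * T + j))
        have := abs_le.1 this
        linarith [this.1]
      have := Finset.sum_le_sum h5
      rw [Finset.sum_const, Finset.card_range, nsmul_eq_mul] at this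
      have hcard : ((n % T : ℕ) : ℝ) ≤ T := by
        exact_mod_cast (Nat.mod_lt n hT).le
      nlinarith
    have hq : (n : ℝ) * (S / T) - M ≤ ((n / T : ℕ) : ℝ) * S := by
      have hn : (n : ℝ) = ((n / T : ℕ) : ℝ) * T + ((n % T : ℕ) : ℝ) := by
        exact_mod_cast hnsplit
      have hcard : ((n % T : ℕ) : ℝ) ≤ T := by
        exact_mod_cast (Nat.mod_lt n hT).le
      have hmod0 : (0 : ℝ) ≤ ((n % T : ℕ) : ℝ) := Nat.cast_nonneg _
      have habs : ((n % T : ℕ) : ℝ) * (S / T) ≤ M := by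
        rcases le_or_gt 0 S with hS | hS
        · have h7 : ((n % T : ℕ) : ℝ) * (S / T) ≤ T * (S / T) := by
            apply mul_le_mul_of_nonneg_right hcard (by positivity)
          have h8 : (T : ℝ) * (S / T) = S := by field_simp
          have : S ≤ M := le_trans (le_abs_self S) hSM
          linarith
        · have h7 : ((n % T : ℕ) : ℝ) * (S / T) ≤ 0 := by
            apply mul_nonpos_of_nonneg_of_nonpos hmod0
            exact div_nonpos_of_nonpos_of_nonneg hS.le hTpos.le
          linarith
      have hexp : (n : ℝ) * (S / T)
          = ((n / T : ℕ) : ℝ) * S + ((n % T : ℕ) : ℝ) * (S / T) := by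
        rw [hn]; field_simp
      linarith
    simp only [hBdef]
    linarith
  -- existence of finite spanning sets
  have hspan : ∀ n : ℕ, ∃ E : Finset K,
      ∀ y : K, ∃ x ∈ E, ∀ j < n, dist (g^[j] y) (g^[j] x) < ε := by
    intro n
    have hU : ∀ x : K, IsOpen {y : K | ∀ j < n, dist (g^[j] y) (g^[j] x) < ε} := by
      intro x
      have heq : {y : K | ∀ j < n, dist (g^[j] y) (g^[j] x) < ε}
          = ⋂ j ∈ Finset.range n, {y : K | dist (g^[j] y) (g^[j] x) < ε} := by
        ext y; simp [Finset.mem_range]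
      rw [heq]
      exact isOpen_biInter_finset fun j _ =>
        isOpen_lt (Continuous.dist (hg.iterate j) continuous_const) continuous_const
    obtain ⟨t, ht⟩ := isCompact_univ.elim_finite_subcover
      (fun x : K => {y : K | ∀ j < n, dist (g^[j] y) (g^[j] x) < ε}) hU
      (fun y _ => Set.mem_iUnion.2 ⟨y, fun j _ => by simp [hε]⟩)
    refine ⟨t, fun y => ?_⟩
    obtain ⟨x, hx, hy⟩ := Set.mem_iUnion₂.1 (ht (Set.mem_univ y))
    exact ⟨x, hx, hy⟩
  -- r facts
  have hrmem : ∀ n : ℕ, ∃ E : Finset K,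
      (∀ y : K, ∃ x ∈ E, ∀ j < n, dist (g^[j] y) (g^[j] x) < ε) ∧ E.card = r n ε := by
    intro n
    obtain ⟨E, hE⟩ := hspan n
    have : r n ε ∈ {m : ℕ | ∃ E : Finset K,
        (∀ y : K, ∃ x ∈ E, ∀ j < n, dist (g^[j] y) (g^[j] x) < ε) ∧ E.card = m} := by
      rw [hr]
      exact Nat.sInf_mem ⟨E.card, E, hE, rfl⟩
    exact this
  have hrpos : ∀ n : ℕ, 1 ≤ r n ε := by
    intro n
    obtain ⟨E, hE, hcard⟩ := hrmem n
    rw [← hcard]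
    obtain ⟨x, hx, -⟩ := hE (Classical.arbitrary K)
    exact Finset.card_pos.2 ⟨x, hx⟩
  have hrle : ∀ (n : ℕ) (E : Finset K),
      (∀ y : K, ∃ x ∈ E, ∀ j < n, dist (g^[j] y) (g^[j] x) < ε) → r n ε ≤ E.card := by
    intro n E hE
    rw [hr]
    exact Nat.sInf_le ⟨E, hE, rfl⟩
  -- Q lower bound
  have hQge : ∀ n : ℕ, (r n ε : ℝ) * Real.exp (B n) ≤ Q n ε := by
    intro n
    rw [hQ]
    apply le_csInf
    · obtain ⟨E, hE⟩ := hspan n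
      exact ⟨_, E, hE, rfl⟩
    · rintro c ⟨E, hE, rfl⟩
      calc (r n ε : ℝ) * Real.exp (B n)
          ≤ (E.card : ℝ) * Real.exp (B n) := by
            apply mul_le_mul_of_nonneg_right _ (Real.exp_pos _).le
            exact_mod_cast hrle n E hE
        _ = ∑ _x ∈ E, Real.exp (B n) := by
            rw [Finset.sum_const, nsmul_eq_mul]
        _ ≤ ∑ x ∈ E, Real.exp (∑ j ∈ Finset.range n, φ (g^[j] x)) :=
            Finset.sum_le_sum fun x _ => Real.exp_le_exp.2 (hbirk x n)
  have hrR : ∀ n : ℕ, (1 : ℝ) ≤ (r n ε : ℝ) := fun n => by exact_mod_cast hrpos n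
  have hQpos : ∀ n : ℕ, 0 < Q n ε := by
    intro n
    have := hQge n
    nlinarith [Real.exp_pos (B n), hrR n]
  have hlog : ∀ n : ℕ, Real.log (r n ε) + B n ≤ Real.log (Q n ε) := by
    intro n
    have hrp : (0 : ℝ) < (r n ε : ℝ) := lt_of_lt_of_le one_pos (hrR n)
    have h1 : Real.log ((r n ε : ℝ) * Real.exp (B n)) ≤ Real.log (Q n ε) :=
      Real.log_le_log (by positivity) (hQge n)
    rwa [Real.log_mul (ne_of_gt hrp) (Real.exp_ne_zero _), Real.log_exp] at h1
  -- pointwise scaled inequality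
  have hptwise : ∀ n : ℕ, 1 ≤ n →
      (1 / (n : ℝ)) * Real.log (r n ε) + (S / T - δ - (T + 1) * M * (1 / n))
        ≤ (1 / (n : ℝ)) * Real.log (Q n ε) := by
    intro n hn
    have hn0 : (0 : ℝ) < n := by exact_mod_cast hn
    have h1 := mul_le_mul_of_nonneg_left (hlog n) (by positivity : (0 : ℝ) ≤ 1 / n)
    have key : (1 / (n : ℝ)) * (Real.log (r n ε) + B n)
        = (1 / (n : ℝ)) * Real.log (r n ε) + (S / T - δ - (T + 1) * M * (1 / n)) := by
      simp only [hBdef]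
      field_simp
    linarith [key ▸ h1]
  -- pass to limsup over EReal
  set a : ℕ → EReal := fun n => (((1 / (n : ℝ)) * Real.log (r n ε) : ℝ) : EReal) with hadef
  set b : ℕ → EReal := fun n => (((1 / (n : ℝ)) * Real.log (Q n ε) : ℝ) : EReal) with hbdef
  set v : ℕ → EReal := fun n => ((S / T - δ - (T + 1) * M * (1 / (n : ℝ)) : ℝ) : EReal) with hvdef
  have hc : ((1 / (T : ℝ)) * ∑ j ∈ Finset.range T, φ (g^[j] p) - δ : ℝ) = S / T - δ := by
    rw [hSdef]; ring
  have hvlim : Filter.Tendsto (fun n : ℕ => (S / T - δ - (T + 1) * M * (1 / (n : ℝ)) : ℝ))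
      Filter.atTop (nhds (S / T - δ)) := by
    have h0 : Filter.Tendsto (fun n : ℕ => (1 : ℝ) / n) Filter.atTop (nhds 0) :=
      tendsto_one_div_atTop_nhds_zero_nat
    have := Filter.Tendsto.sub (tendsto_const_nhds (x := S / T - δ))
      (h0.const_mul ((T + 1) * M))
    simpa using this
  have hliminf : Filter.liminf v Filter.atTop = ((S / T - δ : ℝ) : EReal) :=
    (EReal.tendsto_coe.2 hvlim).liminf_eq
  have h2 : Filter.limsup a Filter.atTop + Filter.liminf v Filter.atTop
      ≤ Filter.limsup (a + v) Filter.atTop := EReal.le_limsup_add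
  have hev : ∀ᶠ n in Filter.atTop, (a + v) n ≤ b n := by
    filter_upwards [Filter.eventually_ge_atTop 1] with n hn
    show a n + v n ≤ b n
    simp only [hadef, hbdef, hvdef, ← EReal.coe_add]
    exact EReal.coe_le_coe_iff.2 (hptwise n hn)
  have h3 : Filter.limsup (a + v) Filter.atTop ≤ Filter.limsup b Filter.atTop :=
    Filter.limsup_le_limsup hev
  calc Filter.limsup a Filter.atTop
        + (((1 / (T : ℝ)) * ∑ j ∈ Finset.range T, φ (g^[j] p) - δ : ℝ) : EReal)
      = Filter.limsup a Filter.atTop + Filter.liminf v Filter.atTop := by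
        rw [hliminf, hc]
    _ ≤ Filter.limsup (a + v) Filter.atTop := h2
    _ ≤ Filter.limsup b Filter.atTop := h3
end

section
/- Let E be a real normed vector space, G : E → E a linear map, C > 0, λ ∈ (0,1), and r ≥ max(1, 2λ/(C(1−λ²))). Let u_s, u_u ∈ E, u = u_s + u_u, with ‖u‖ ≥ r and ‖u_s‖ ≤ ((1 − λ/(C·r))/(1+λ²))·‖u‖. Assume that for every n ≥ 0 one has ‖G^n(u_s)‖ ≤ C·λ^n·‖u_s‖ and ‖G^n(u_u)‖ ≥ C·λ^{−n}·‖u_u‖. Then ‖G^n(u)‖ ≥ 1 for every n ≥ 0. -/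
/-- Hyperbolic growth estimate: a vector `u = u_s + u_u` of
norm at least `r` whose stable component is a sufficiently small fraction of
its norm never re-enters the unit ball under forward iteration of the linear
map `G`, given uniform contraction `C·λ^n` on the stable component and uniform
expansion `C·λ^{−n}` on the unstable component. -/
theorem stmt_4 {E : Type*} [NormedAddCommGroup E] [NormedSpace ℝ E]
    (G : E → E) (hG : IsLinearMap ℝ G) (C l r : ℝ) (hC : 0 < C)
    (hl : l ∈ Set.Ioo (0 : ℝ) 1) (hr : max 1 (2 * l / (C * (1 - l ^ 2))) ≤ r)
    (us uu u : E) (hu : u = us + uu) (hunorm : r ≤ ‖u‖)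
    (hs : ‖us‖ ≤ ((1 - l / (C * r)) / (1 + l ^ 2)) * ‖u‖)
    (hcontr : ∀ n : ℕ, ‖G^[n] us‖ ≤ C * l ^ n * ‖us‖)
    (hexp : ∀ n : ℕ, C * l ^ (-(n : ℤ)) * ‖uu‖ ≤ ‖G^[n] uu‖) :
    ∀ n : ℕ, 1 ≤ ‖G^[n] u‖ := by
  obtain ⟨hl0, hl1⟩ := hl
  have hr1 : (1 : ℝ) ≤ r := le_trans (le_max_left _ _) hr
  have hr0 : (0 : ℝ) < r := lt_of_lt_of_le one_pos hr1
  have hGn : ∀ n : ℕ, G^[n] u = G^[n] us + G^[n] uu := by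
    intro n
    rw [hu]
    induction n with
    | zero => simp
    | succ n ih =>
        rw [Function.iterate_succ_apply', Function.iterate_succ_apply',
          Function.iterate_succ_apply', ih, hG.map_add]
  intro n
  match n with
  | 0 => simpa using le_trans hr1 hunorm
  | Nat.succ m =>
    set n := m + 1 with hn
    have hlnpos : 0 < l ^ n := pow_pos hl0 n
    have hln : l ^ n ≤ l := by
      calc l ^ n ≤ l ^ 1 := pow_le_pow_of_le_one hl0.le hl1.le (by omega)
      _ = l := pow_one l
    have hinv : l⁻¹ ≤ (l ^ n)⁻¹ := inv_anti₀ hlnpos hln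
    -- key1 : C * l⁻¹ * ‖uu‖ ≤ ‖G^[n] uu‖
    have key1 : C * l⁻¹ * ‖uu‖ ≤ ‖G^[n] uu‖ := by
      have hz : l ^ (-(n : ℤ)) = (l ^ n)⁻¹ := by
        rw [zpow_neg, zpow_natCast]
      have := hexp n
      rw [hz] at this
      refine le_trans ?_ this
      exact mul_le_mul_of_nonneg_right
        (mul_le_mul_of_nonneg_left hinv hC.le) (norm_nonneg uu)
    have key2 : ‖G^[n] us‖ ≤ C * l * ‖us‖ := by
      refine le_trans (hcontr n) ?_
      exact mul_le_mul_of_nonneg_right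
        (mul_le_mul_of_nonneg_left hln hC.le) (norm_nonneg us)
    have key3 : ‖G^[n] uu‖ ≤ ‖G^[n] u‖ + ‖G^[n] us‖ := by
      have h : G^[n] uu = G^[n] u - G^[n] us := by rw [hGn n]; abel
      rw [h]
      exact norm_sub_le _ _
    have huu : ‖u‖ - ‖us‖ ≤ ‖uu‖ := by
      have h := norm_add_le us uu
      rw [← hu] at h
      linarith
    have h1pl : (0 : ℝ) < 1 + l ^ 2 := by positivity
    have hcoef : C * (1 + l ^ 2) / l * ((1 - l / (C * r)) / (1 + l ^ 2)) = C / l - 1 / r := by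
      field_simp
    have h5 : (C * (1 + l ^ 2) / l) * ‖us‖ ≤ (C / l - 1 / r) * ‖u‖ := by
      rw [← hcoef]
      calc (C * (1 + l ^ 2) / l) * ‖us‖
          ≤ (C * (1 + l ^ 2) / l) * (((1 - l / (C * r)) / (1 + l ^ 2)) * ‖u‖) :=
            mul_le_mul_of_nonneg_left hs (by positivity)
        _ = C * (1 + l ^ 2) / l * ((1 - l / (C * r)) / (1 + l ^ 2)) * ‖u‖ := by ring
    have h6 : C * l⁻¹ * (‖u‖ - ‖us‖) ≤ C * l⁻¹ * ‖uu‖ :=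
      mul_le_mul_of_nonneg_left huu (by positivity)
    have heq : C * l⁻¹ * (‖u‖ - ‖us‖) - C * l * ‖us‖
        = C / l * ‖u‖ - C * (1 + l ^ 2) / l * ‖us‖ := by
      field_simp
      ring
    have h7 : (1 : ℝ) ≤ 1 / r * ‖u‖ := by
      rw [div_mul_eq_mul_div, one_mul, le_div_iff₀ hr0, one_mul]
      exact hunorm
    have h8 : (C / l - 1 / r) * ‖u‖ = C / l * ‖u‖ - 1 / r * ‖u‖ := by ring
    linarith
end

section
/- Let X be a Baire topological space and F : X → ℝ a function. Suppose that for every rational number α the set U_α := int{x ∈ X : F(x) > α} ∪ int{x ∈ X : F(x) < α} is dense in X (int denoting topological interior). Then there exists a dense G_δ subset S of X such that F is continuous at every point of S; indeed one may take S = ⋂_{α∈ℚ} U_α. -/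
/-- If, for every rational `α`, the union of the interiors of
`{F > α}` and `{F < α}` is dense in the Baire space `X`, then `F` has a dense
`G_δ` set of continuity points; indeed one may take
`S = ⋂_{α ∈ ℚ} (int{F > α} ∪ int{F < α})`. -/
theorem stmt_5 {X : Type*} [TopologicalSpace X] [BaireSpace X] (F : X → ℝ)
    (h : ∀ α : ℚ,
      Dense (interior {x : X | (α : ℝ) < F x} ∪ interior {x : X | F x < (α : ℝ)})) :
    ∃ S : Set X,
      (S = ⋂ α : ℚ,
        (interior {x : X | (α : ℝ) < F x} ∪ interior {x : X | F x < (α : ℝ)})) ∧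
      Dense S ∧ IsGδ S ∧ ∀ x ∈ S, ContinuousAt F x := by
  refine ⟨_, rfl, dense_iInter_of_isOpen
      (fun α => isOpen_interior.union isOpen_interior) h,
    IsGδ.iInter_of_isOpen (fun α => isOpen_interior.union isOpen_interior), ?_⟩
  intro x hx
  rw [Set.mem_iInter] at hx
  rw [ContinuousAt, tendsto_order]
  constructor
  · intro b hb
    obtain ⟨α, hbα, hαF⟩ := exists_rat_btwn hb
    rcases hx α with hmem | hmem
    · filter_upwards [isOpen_interior.mem_nhds hmem] with y hy
      have : y ∈ {x : X | (α:ℝ) < F x} := interior_subset hy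
      exact hbα.trans this
    · exact absurd (interior_subset hmem) (by simpa using hαF.le)
  · intro b hb
    obtain ⟨α, hFα, hαb⟩ := exists_rat_btwn hb
    rcases hx α with hmem | hmem
    · exact absurd (interior_subset hmem) (by simpa using hFα.le)
    · filter_upwards [isOpen_interior.mem_nhds hmem] with y hy
      have : y ∈ {x : X | F x < (α:ℝ)} := interior_subset hy
      exact lt_trans this hαb
end

section
/- Let U be a topological space, f₀ ∈ U, and a : ℕ → U → ℝ a family of functions such that (i) for every g ∈ U the sequence (a_n(g))_{n≥1} is subadditive, i.e. a_{m+n}(g) ≤ a_m(g) + a_n(g) for all m,n ≥ 1, and (ii) for every n ≥ 1 the function g ↦ a_n(g) is continuous at f₀. Assume σ(f₀) := inf_{n≥1} a_n(f₀)/n is finite. Then for every α > 0 there exist an integer N₁ ≥ 1 and a neighborhood V of f₀ such that for every g ∈ V and every n ≥ N₁: a_n(g) ≤ (σ(f₀) + α)·n. -/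
private lemma stmt_7_iter {U : Type*} (a : ℕ → U → ℝ)
    (hsub : ∀ g : U, ∀ m n : ℕ, 1 ≤ m → 1 ≤ n → a (m + n) g ≤ a m g + a n g)
    (g : U) (m : ℕ) (hm : 1 ≤ m) :
    ∀ q : ℕ, 1 ≤ q → a (q * m) g ≤ q * a m g := by
  intro q hq
  induction q with
  | zero => omega
  | succ k ih =>
    rcases Nat.eq_or_lt_of_le hq with h | h
    · simp [← h]
    · have hk : 1 ≤ k := by omega
      have h1 : a ((k + 1) * m) g ≤ a (k * m) g + a m g := by
        have := hsub g (k * m) m (Nat.mul_pos hk hm) hm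
        simpa [add_mul, one_mul] using this
      have := ih hk
      push_cast
      nlinarith [this]

/-- Upper semicontinuity, uniform in large times, of the
exponential growth rate `σ = inf_{n≥1} a_n(f₀)/n` of a subadditive family
depending continuously on a parameter. -/
theorem stmt_7 {U : Type*} [TopologicalSpace U] (f₀ : U) (a : ℕ → U → ℝ)
    (hsub : ∀ g : U, ∀ m n : ℕ, 1 ≤ m → 1 ≤ n → a (m + n) g ≤ a m g + a n g)
    (hcont : ∀ n : ℕ, 1 ≤ n → ContinuousAt (a n) f₀)
    (σ : ℝ) (hσ : IsGLB {x : ℝ | ∃ n : ℕ, 1 ≤ n ∧ x = a n f₀ / n} σ) :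
    ∀ α : ℝ, 0 < α → ∃ N₁ : ℕ, 1 ≤ N₁ ∧ ∃ V ∈ nhds f₀,
      ∀ g ∈ V, ∀ n : ℕ, N₁ ≤ n → a n g ≤ (σ + α) * n := by
  intro α hα
  -- pick m with a m f₀ / m < σ + α/4
  obtain ⟨x, ⟨m, hm1, rfl⟩, -, hxlt⟩ :=
    hσ.exists_between (show σ < σ + α / 4 by linarith)
  have hmpos : (0:ℝ) < m := by exact_mod_cast hm1
  set ε : ℝ := α * m / 4 with hε
  have hεpos : 0 < ε := by positivity
  set s : ℝ := σ + α / 2 with hs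
  have hb : a m f₀ + ε ≤ s * m := by
    have : a m f₀ < (σ + α / 4) * m := (div_lt_iff₀ hmpos).1 hxlt
    rw [hs]; rw [hε] at *
    nlinarith
  set C : ℝ := (∑ j ∈ Finset.Icc 1 m, |a j f₀|) + ε with hC
  have hCpos : 0 ≤ C := by
    have : (0:ℝ) ≤ ∑ j ∈ Finset.Icc 1 m, |a j f₀| :=
      Finset.sum_nonneg fun j _ => abs_nonneg _
    linarith
  -- the neighborhood
  have hV : ∀ᶠ g in nhds f₀, ∀ j ∈ Finset.Icc 1 m, a j g < a j f₀ + ε := by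
    rw [Filter.eventually_all_finset]
    intro j hj
    have hj1 : 1 ≤ j := (Finset.mem_Icc.1 hj).1
    exact ((hcont j hj1).tendsto).eventually_lt_const (by linarith)
  refine ⟨max m (⌈(m * |s| + C) / (α / 2)⌉₊ + 1), le_trans hm1 (le_max_left _ _),
    {g | ∀ j ∈ Finset.Icc 1 m, a j g < a j f₀ + ε}, hV, ?_⟩
  intro g hg n hn
  have hnm : m ≤ n := le_trans (le_max_left _ _) hn
  set q := n / m with hq
  set r := n % m with hr
  have hq1 : 1 ≤ q := Nat.one_le_div_iff (by omega : 0 < m) |>.2 hnm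
  have hrm : r < m := Nat.mod_lt _ (by omega)
  have hnqr : q * m + r = n := by rw [hq, hr]; exact Nat.div_add_mod' n m
  have hag : a m g < a m f₀ + ε := hg m (Finset.mem_Icc.2 ⟨hm1, le_rfl⟩)
  have hqm : a (q * m) g ≤ q * (s * m) := by
    calc a (q * m) g ≤ q * a m g := stmt_7_iter a hsub g m hm1 q hq1
      _ ≤ q * (a m f₀ + ε) := by
          have : (0:ℝ) ≤ q := by positivity
          nlinarith
      _ ≤ q * (s * m) := by
          have : (0:ℝ) ≤ q := by positivity
          nlinarith
  have key : a n g ≤ (q * m : ℝ) * s + C := by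
    rcases Nat.eq_zero_or_pos r with h0 | hr1
    · have : n = q * m := by simp [← hnqr, h0]
      rw [this]
      calc a (q * m) g ≤ q * (s * m) := hqm
        _ ≤ (q * m : ℝ) * s + C := by push_cast; nlinarith
    · have hsplit : a n g ≤ a (q * m) g + a r g := by
        rw [← hnqr]
        exact hsub g (q * m) r (Nat.mul_pos hq1 hm1) hr1
      have harg : a r g ≤ C := by
        have h1 : a r g < a r f₀ + ε := hg r (Finset.mem_Icc.2 ⟨hr1, by omega⟩)
        have h2 : a r f₀ ≤ ∑ j ∈ Finset.Icc 1 m, |a j f₀| := by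
          calc a r f₀ ≤ |a r f₀| := le_abs_self _
            _ ≤ _ := Finset.single_le_sum (f := fun j => |a j f₀|)
                (fun j _ => abs_nonneg _) (Finset.mem_Icc.2 ⟨hr1, by omega⟩)
        rw [hC]; linarith
      calc a n g ≤ a (q * m) g + a r g := hsplit
        _ ≤ q * (s * m) + C := by linarith
        _ = (q * m : ℝ) * s + C := by push_cast; ring
  -- from q*m = n - r get the bound with n
  have hqmn : (q * m : ℝ) * s ≤ n * s + m * |s| := by
    have h1 : (q : ℝ) * m + r = n := by exact_mod_cast hnqr
    rw [show ((q : ℝ) * m) * s = ((n : ℝ) - r) * s from by rw [show ((n:ℝ) - r) = (q:ℝ)*m from by linarith]]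
    rw [sub_mul]
    have hr0 : (0:ℝ) ≤ r := by positivity
    have hrm' : (r:ℝ) ≤ m := by exact_mod_cast hrm.le
    have : -(r * s) ≤ m * |s| := by
      rcases le_or_gt 0 s with hs0 | hs0
      · have : 0 ≤ r * s := by positivity
        have : 0 ≤ m * |s| := by positivity
        linarith
      · rw [abs_of_neg hs0]; nlinarith
    linarith
  -- finally the choice of N₁
  have hnN : ((m * |s| + C) / (α / 2)) ≤ n := by
    have h1 : (⌈(m * |s| + C) / (α / 2)⌉₊ : ℝ) ≤ n := by
      have : ⌈(m * |s| + C) / (α / 2)⌉₊ ≤ n := le_trans (le_trans (Nat.le_succ _) (le_max_right _ _)) hn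
      exact_mod_cast this
    exact le_trans (Nat.le_ceil _) h1
  have hfin : m * |s| + C ≤ (α / 2) * n := by
    have hα2 : (0:ℝ) < α / 2 := by linarith
    have := (div_le_iff₀ hα2).1 hnN
    linarith
  calc a n g ≤ (q * m : ℝ) * s + C := key
    _ ≤ n * s + m * |s| + C := by linarith
    _ ≤ n * s + (α / 2) * n := by linarith
    _ = (σ + α) * n := by rw [hs]; ring
end

section
/- Let X be a compact metric space, μ a Borel probability measure on X, and (ν_k)_{k∈ℕ} a sequence of Borel probability measures on X such that (i) for every continuous φ : X → ℝ, ∫ φ dν_k → ∫ φ dμ as k → ∞, and (ii) for every k there is a closed set K_k ⊆ X with ν_k(X∖K_k) = 0 and μ(K_k) = 0. Then the set U := {φ ∈ C(X,ℝ) : there exists k with ∫ φ dν_k > ∫ φ dμ} is open and dense in C(X,ℝ) with the uniform (sup-norm) topology. -/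
open MeasureTheory
open scoped ENNReal

private lemma integ_lip {X : Type*} [MetricSpace X] [CompactSpace X]
    [MeasurableSpace X] [BorelSpace X] (ρ : Measure X) [IsProbabilityMeasure ρ] :
    LipschitzWith 1 (fun φ : C(X, ℝ) => ∫ x, φ x ∂ρ) := by
  apply LipschitzWith.of_dist_le_mul
  intro φ ψ
  have hφ : Integrable (fun x => φ x) ρ :=
    φ.continuous.integrable_of_hasCompactSupport (HasCompactSupport.of_compactSpace φ)
  have hψ : Integrable (fun x => ψ x) ρ :=
    ψ.continuous.integrable_of_hasCompactSupport (HasCompactSupport.of_compactSpace ψ)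
  rw [Real.dist_eq, ← integral_sub hφ hψ, ← Real.norm_eq_abs]
  calc ‖∫ x, (φ x - ψ x) ∂ρ‖ ≤ ‖φ - ψ‖ * (ρ Set.univ).toReal := by
        apply norm_integral_le_of_norm_le_const
        filter_upwards with x
        simpa using ContinuousMap.norm_coe_le_norm (φ - ψ) x
    _ = 1 * dist φ ψ := by
        simp [dist_eq_norm, measure_univ]

/-- If a Borel probability measure `μ` on a compact metric
space is weakly approximated by Borel probability measures `ν_k`, each carried
by a closed set of `μ`-measure zero, then the set of continuous potentials `φ`
for which some `∫ φ dν_k` exceeds `∫ φ dμ` is open and dense in `C(X,ℝ)`. -/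
theorem stmt_11 {X : Type*} [MetricSpace X] [CompactSpace X]
    [MeasurableSpace X] [BorelSpace X]
    (μ : Measure X) [IsProbabilityMeasure μ]
    (ν : ℕ → Measure X) [∀ k, IsProbabilityMeasure (ν k)]
    (hconv : ∀ φ : C(X, ℝ), Filter.Tendsto (fun k : ℕ => ∫ x, φ x ∂(ν k))
      Filter.atTop (nhds (∫ x, φ x ∂μ)))
    (K : ℕ → Set X) (hKcl : ∀ k, IsClosed (K k))
    (hνK : ∀ k, (ν k) (K k)ᶜ = 0) (hμK : ∀ k, μ (K k) = 0) :
    IsOpen {φ : C(X, ℝ) | ∃ k : ℕ, (∫ x, φ x ∂μ) < ∫ x, φ x ∂(ν k)} ∧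
    Dense {φ : C(X, ℝ) | ∃ k : ℕ, (∫ x, φ x ∂μ) < ∫ x, φ x ∂(ν k)} := by
  have hint : ∀ (φ : C(X, ℝ)) (ρ : Measure X) [IsProbabilityMeasure ρ],
      Integrable (fun x => φ x) ρ := fun φ ρ _ =>
    φ.continuous.integrable_of_hasCompactSupport (HasCompactSupport.of_compactSpace φ)
  constructor
  · have : {φ : C(X, ℝ) | ∃ k : ℕ, (∫ x, φ x ∂μ) < ∫ x, φ x ∂(ν k)} =
        ⋃ k : ℕ, {φ : C(X, ℝ) | (∫ x, φ x ∂μ) < ∫ x, φ x ∂(ν k)} := by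
      ext φ; simp
    rw [this]
    apply isOpen_iUnion
    intro k
    have : IsOpen {p : ℝ × ℝ | p.1 < p.2} := isOpen_lt continuous_fst continuous_snd
    exact this.preimage (((integ_lip μ).continuous).prodMk ((integ_lip (ν k)).continuous))
  · rw [Metric.dense_iff]
    intro φ ε hε
    -- choose k with |∫φ dν_k - ∫φ dμ| < ε/4
    have h4 : (0:ℝ) < ε / 4 := by linarith
    obtain ⟨N, hN⟩ := Metric.tendsto_atTop.1 (hconv φ) (ε / 4) h4
    set k := N with hkN
    have hk : dist (∫ x, φ x ∂(ν k)) (∫ x, φ x ∂μ) < ε / 4 := hN N le_rfl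
    -- choose open U ⊇ K k with μ U < 1/2
    obtain ⟨U, hKU, hUopen, hUμ⟩ :=
      Set.exists_isOpen_lt_of_lt (μ := μ) (K k) (1/2)
        (by rw [hμK k]; norm_num)
    -- Urysohn function g : 0 on Uᶜ, 1 on K k
    have hdisj : Disjoint Uᶜ (K k) := Set.disjoint_compl_left_iff_subset.2 hKU
    obtain ⟨g, hg0, hg1, hg01⟩ :=
      exists_continuous_zero_one_of_isClosed hUopen.isClosed_compl (hKcl k) hdisj
    set ψ : C(X, ℝ) := φ + (ε / 2) • g with hψ
    refine ⟨ψ, ?_, ?_⟩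
    · -- ψ ∈ ball φ ε
      rw [Metric.mem_ball, dist_eq_norm]
      have heq : ψ - φ = (ε / 2) • g := by rw [hψ]; ring
      rw [heq]
      have hle : ‖(ε / 2) • g‖ ≤ ε / 2 := by
        apply (ContinuousMap.norm_le _ (by linarith : (0:ℝ) ≤ ε/2)).2
        intro x
        have h01 := hg01 x
        simp only [ContinuousMap.smul_apply, smul_eq_mul, Real.norm_eq_abs]
        rw [abs_mul, abs_of_pos (by linarith : (0:ℝ) < ε/2)]
        have : |g x| ≤ 1 := abs_le.2 ⟨by linarith [h01.1], h01.2⟩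
        nlinarith
      linarith
    · refine ⟨k, ?_⟩
      have hgint : ∀ (ρ : Measure X) [IsProbabilityMeasure ρ],
          Integrable (fun x => g x) ρ := fun ρ _ => hint g ρ
      -- ∫ g dν k = 1
      have hgν : (∫ x, g x ∂(ν k)) = 1 := by
        have hae : (fun x => g x) =ᵐ[ν k] fun _ => (1:ℝ) := by
          apply Filter.eventuallyEq_iff_exists_mem.2
          exact ⟨K k, by rw [mem_ae_iff]; exact hνK k, fun x hx => hg1 hx⟩
        rw [integral_congr_ae hae, integral_const]
        simp
      -- ∫ g dμ ≤ μ U ≤ 1/2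
      have hgμ : (∫ x, g x ∂μ) ≤ 1/2 := by
        have hind : (∫ x, g x ∂μ) ≤ ∫ x, U.indicator (fun _ => (1:ℝ)) x ∂μ := by
          apply integral_mono (hgint μ)
          · exact (integrable_indicator_iff hUopen.measurableSet).2
              (integrableOn_const (measure_lt_top μ U).ne)
          · intro x
            by_cases hx : x ∈ U
            · simpa [Set.indicator_of_mem hx] using (hg01 x).2
            · have h0 : g x = 0 := hg0 hx
              simp [Set.indicator_of_notMem hx, h0]
        have : (∫ x, U.indicator (fun _ => (1:ℝ)) x ∂μ) = (μ U).toReal := by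
          rw [integral_indicator hUopen.measurableSet]
          simp
          rfl
        rw [this] at hind
        refine hind.trans ?_
        have h1 : μ U ≤ 1/2 := le_of_lt hUμ
        have h2 : (μ U).toReal ≤ ((1/2 : ℝ≥0∞)).toReal :=
          ENNReal.toReal_mono (by norm_num) h1
        simpa using h2
      have hψμ : (∫ x, ψ x ∂μ) = (∫ x, φ x ∂μ) + (ε/2) * ∫ x, g x ∂μ := by
        simp only [hψ, ContinuousMap.add_apply, ContinuousMap.smul_apply, smul_eq_mul]
        rw [integral_add (hint φ μ) ((hgint μ).const_mul _), integral_const_mul]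
      have hψν : (∫ x, ψ x ∂(ν k)) = (∫ x, φ x ∂(ν k)) + (ε/2) := by
        simp only [hψ, ContinuousMap.add_apply, ContinuousMap.smul_apply, smul_eq_mul]
        rw [integral_add (hint φ (ν k)) ((hgint (ν k)).const_mul _), integral_const_mul, hgν]
        ring
      rw [hψμ, hψν]
      have hdist : |(∫ x, φ x ∂(ν k)) - ∫ x, φ x ∂μ| < ε/4 := by
        rw [← Real.dist_eq]; exact hk
      have h1 : (∫ x, φ x ∂(ν k)) > (∫ x, φ x ∂μ) - ε/4 := by
        have := abs_lt.1 hdist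
        linarith [this.1]
      nlinarith [hgμ]
end

section
/- Let X be a compact metric space and (μ_i)_{i∈ℕ} a sequence of Borel probability measures on X. Suppose that for each i there are Borel probability measures (ν_{i,k})_{k∈ℕ} and closed sets K_{i,k} ⊆ X such that ∫ φ dν_{i,k} → ∫ φ dμ_i as k → ∞ for every continuous φ : X → ℝ, ν_{i,k}(X∖K_{i,k}) = 0, and μ_i(K_{i,k}) = 0. Let S be any set of Borel probability measures on X containing all the ν_{i,k}. Then the set {φ ∈ C(X,ℝ) : for every i there exists ν ∈ S with ∫ φ dν > ∫ φ dμ_i} is comeagre (residual) in C(X,ℝ) with the uniform topology. -/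
open MeasureTheory

lemma cm_integrable {X : Type*} [MetricSpace X] [CompactSpace X]
    [MeasurableSpace X] [BorelSpace X]
    (m : Measure X) [IsFiniteMeasure m] (f : C(X,ℝ)) :
    Integrable (fun x => f x) m := by
  apply f.continuous.integrable_of_hasCompactSupport
  exact IsCompact.of_isClosed_subset isCompact_univ (isClosed_tsupport _) (Set.subset_univ _)

lemma integral_lipschitz {X : Type*} [MetricSpace X] [CompactSpace X]
    [MeasurableSpace X] [BorelSpace X]
    (m : Measure X) [IsProbabilityMeasure m] :
    LipschitzWith 1 (fun φ : C(X,ℝ) => ∫ x, φ x ∂m) := by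
  apply LipschitzWith.of_dist_le_mul
  intro φ ψ
  rw [Real.dist_eq, ← integral_sub (cm_integrable m φ) (cm_integrable m ψ)]
  calc |∫ x, (φ x - ψ x) ∂m| ≤ dist φ ψ * (m Set.univ).toReal := by
        rw [← Real.norm_eq_abs]
        apply norm_integral_le_of_norm_le_const
        filter_upwards with x
        simpa [Real.norm_eq_abs, ← Real.dist_eq] using ContinuousMap.dist_apply_le_dist x
    _ = 1 * dist φ ψ := by simp

/-- If each measure `μ_i` of a countable family of Borel
probability measures is weakly approximated by Borel probability measures
`ν_{i,k}`, each carried by a closed set of `μ_i`-measure zero, and `S` is any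
set of Borel probability measures containing all the `ν_{i,k}`, then the set
of continuous potentials `φ` such that for every `i` some `ν ∈ S` has
`∫ φ dν > ∫ φ dμ_i` is comeagre (residual) in `C(X,ℝ)`. -/
theorem stmt_12 {X : Type*} [MetricSpace X] [CompactSpace X]
    [MeasurableSpace X] [BorelSpace X]
    (μ : ℕ → Measure X) (hμprob : ∀ i, IsProbabilityMeasure (μ i))
    (ν : ℕ → ℕ → Measure X) (hνprob : ∀ i k, IsProbabilityMeasure (ν i k))
    (K : ℕ → ℕ → Set X) (hKcl : ∀ i k, IsClosed (K i k))
    (hconv : ∀ i : ℕ, ∀ φ : C(X, ℝ), Filter.Tendsto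
      (fun k : ℕ => ∫ x, φ x ∂(ν i k)) Filter.atTop (nhds (∫ x, φ x ∂(μ i))))
    (hνK : ∀ i k, (ν i k) (K i k)ᶜ = 0) (hμK : ∀ i k, (μ i) (K i k) = 0)
    (S : Set (Measure X)) (hSprob : ∀ m ∈ S, IsProbabilityMeasure m)
    (hS : ∀ i k, ν i k ∈ S) :
    {φ : C(X, ℝ) | ∀ i : ℕ, ∃ m ∈ S, (∫ x, φ x ∂(μ i)) < ∫ x, φ x ∂m}
      ∈ residual C(X, ℝ) := by
  set U : ℕ → Set C(X, ℝ) :=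
    fun i => {φ : C(X, ℝ) | ∃ m ∈ S, (∫ x, φ x ∂(μ i)) < ∫ x, φ x ∂m} with hU
  have hseteq : {φ : C(X, ℝ) | ∀ i : ℕ, ∃ m ∈ S, (∫ x, φ x ∂(μ i)) < ∫ x, φ x ∂m}
      = ⋂ i, U i := by
    ext φ; simp [hU]
  rw [hseteq, countable_iInter_mem]
  intro i
  haveI := hμprob i
  apply residual_of_dense_open
  · -- openness
    rw [isOpen_iff_mem_nhds]
    rintro φ ⟨m, hmS, hlt⟩
    haveI := hSprob m hmS
    have hcont : Continuous (fun ψ : C(X,ℝ) =>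
        (∫ x, ψ x ∂(μ i), ∫ x, ψ x ∂m)) :=
      ((integral_lipschitz (μ i)).continuous).prodMk ((integral_lipschitz m).continuous)
    have hopen : IsOpen {ψ : C(X,ℝ) | (∫ x, ψ x ∂(μ i)) < ∫ x, ψ x ∂m} :=
      isOpen_lt (integral_lipschitz (μ i)).continuous (integral_lipschitz m).continuous
    exact Filter.mem_of_superset (hopen.mem_nhds hlt)
      (fun ψ hψ => ⟨m, hmS, hψ⟩)
  · -- density
    rw [Metric.dense_iff]
    intro φ ε hε
    -- choose k so that ∫ φ dν_{i,k} is ε/4-close to ∫ φ dμ_i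
    obtain ⟨k, hk⟩ := (Metric.tendsto_atTop.1 (hconv i φ) (ε/4) (by linarith)).imp
      (fun k h => h k le_rfl)
    haveI := hνprob i k
    -- open set U ⊇ K i k with small measure
    obtain ⟨V, hKV, hVopen, hVsmall⟩ :=
      (K i k).exists_isOpen_lt_of_lt (μ := μ i) (1/2 : ENNReal)
        (by rw [hμK i k]; norm_num)
    -- Urysohn function: 0 on Vᶜ, 1 on K i k
    obtain ⟨g, hg0, hg1, hg01⟩ := exists_continuous_zero_one_of_isClosed
      (isClosed_compl_iff.2 hVopen) (hKcl i k)
      (by simp [Set.disjoint_compl_left_iff_subset, hKV])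
    set ψ : C(X, ℝ) := φ + (ε/2) • g with hψ
    have hdist : dist ψ φ < ε := by
      rw [dist_eq_norm]
      have : ψ - φ = (ε/2) • g := by rw [hψ]; abel
      rw [this]
      have hb : ‖(ε/2) • g‖ ≤ ε/2 := by
        apply (ContinuousMap.norm_le _ (by linarith : (0:ℝ) ≤ ε/2)).2
        intro x
        have h01 := hg01 x
        simp only [ContinuousMap.smul_apply, smul_eq_mul, Real.norm_eq_abs, abs_mul]
        rw [abs_of_pos (by linarith : (0:ℝ) < ε/2), abs_of_nonneg h01.1]
        nlinarith [h01.2]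
      linarith
    refine ⟨ψ, Metric.mem_ball.2 hdist, ν i k, hS i k, ?_⟩
    -- compute ∫ ψ dν and ∫ ψ dμ
    have hgint : ∀ (m : Measure X) [IsFiniteMeasure m],
        Integrable (fun x => g x) m := fun m _ => cm_integrable m g
    have hψν : (∫ x, ψ x ∂(ν i k)) = (∫ x, φ x ∂(ν i k)) + ε/2 := by
      have : (∫ x, ψ x ∂(ν i k))
          = (∫ x, φ x ∂(ν i k)) + (ε/2) * ∫ x, g x ∂(ν i k) := by
        simp only [hψ, ContinuousMap.add_apply, ContinuousMap.smul_apply, smul_eq_mul]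
        rw [integral_add (cm_integrable _ φ) ((cm_integrable _ g).const_mul _),
          integral_const_mul]
      rw [this]
      have hgone : (∫ x, g x ∂(ν i k)) = 1 := by
        have hae : ∀ᵐ x ∂(ν i k), g x = 1 := by
          filter_upwards [measure_eq_zero_iff_ae_notMem.1 (hνK i k)] with x hx
          exact hg1 (Set.not_notMem.1 hx)
        rw [integral_congr_ae hae]
        simp
      rw [hgone]; ring
    have hψμ : (∫ x, ψ x ∂(μ i)) < (∫ x, φ x ∂(μ i)) + ε/4 := by
      have hexp : (∫ x, ψ x ∂(μ i))
          = (∫ x, φ x ∂(μ i)) + (ε/2) * ∫ x, g x ∂(μ i) := by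
        simp only [hψ, ContinuousMap.add_apply, ContinuousMap.smul_apply, smul_eq_mul]
        rw [integral_add (cm_integrable _ φ) ((cm_integrable _ g).const_mul _),
          integral_const_mul]
      have hgsmall : (∫ x, g x ∂(μ i)) < 1/2 := by
        have hle : (∫ x, g x ∂(μ i)) ≤ ∫ x, V.indicator (fun _ => (1:ℝ)) x ∂(μ i) := by
          apply integral_mono (cm_integrable _ g)
            ((integrable_const (1:ℝ)).indicator hVopen.measurableSet)
          intro x
          by_cases hx : x ∈ V
          · simp [hx, (hg01 x).2]
          · have : g x = 0 := hg0 hx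
            simp [hx, this]
        have hind : (∫ x, V.indicator (fun _ => (1:ℝ)) x ∂(μ i))
            = ((μ i) V).toReal := by
          rw [integral_indicator_const _ hVopen.measurableSet]; simp; rfl
        have hfin : (μ i) V ≠ ⊤ := (lt_of_lt_of_le hVsmall (by norm_num)).ne
        have : ((μ i) V).toReal < (1/2 : ℝ) := by
          have := (ENNReal.toReal_lt_toReal hfin (by norm_num)).2 hVsmall
          simpa using this
        linarith [hle, hind ▸ hle]
      rw [hexp]
      nlinarith
    have hνclose : |(∫ x, φ x ∂(ν i k)) - (∫ x, φ x ∂(μ i))| < ε/4 := by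
      have := hk
      rwa [Real.dist_eq] at this
    rw [hψν]
    have := abs_lt.1 hνclose
    linarith [hψμ, this.1]
end
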